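/- For μ > -1, let G_{j,μ}(f) = ∫₀¹ t^μ(1-t)^μ f(t mⱼ + (1-t) m*) dt, where mⱼ are the edge midpoints and m* = (v₁+v₂+v₃)/3 is the barycenter, and let φᵢ = λᵢ(1 - 3λ_{i+1} - 3λ_{i+2}). Then G_{j,μ}(φⱼ) = (σ_μ/2)·(-(3μ+4)/(3(2μ+3))) and G_{j,μ}(φᵢ) = (σ_μ/2)·(-(15μ+22)/(12(2μ+3))) for i ≠ j, where σ_μ = B(μ+1, μ+1). -/

import Mathlib

open MeasureTheory

section AuxSecondClass
open intervalIntegral Set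

lemma rpow_cont (q : ℝ) (hq : 0 < q) : Continuous (fun t : ℝ => t ^ q) :=
  continuous_iff_continuousAt.mpr fun x => Real.continuousAt_rpow_const x q (.inr hq.le)

lemma integrable_aux {p q : ℝ} (hp : -1 < p) (hq : -1 < q) :
    IntervalIntegrable (fun t : ℝ => t ^ p * (1 - t) ^ q) volume 0 1 := by
  have h1 : IntervalIntegrable (fun t : ℝ => t ^ p * (1 - t) ^ q) volume 0 (1/2) := by
    apply (intervalIntegrable_rpow' hp).mul_continuousOn
    intro x hx
    apply ContinuousAt.continuousWithinAt
    have hx' : (1 : ℝ) - x ≠ 0 := by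
      rw [uIcc_of_le (by norm_num)] at hx
      have := hx.2; intro h; nlinarith [hx.1]
    exact (Real.continuousAt_rpow_const _ _ (.inl hx')).comp
      ((continuous_const.sub continuous_id).continuousAt)
  have h2 : IntervalIntegrable (fun t : ℝ => t ^ p * (1 - t) ^ q) volume (1/2) 1 := by
    have hbase : IntervalIntegrable (fun t : ℝ => (1 - t) ^ q) volume (1/2) 1 := by
      have := (intervalIntegrable_rpow' hq (a := 0) (b := 1/2)).comp_sub_left 1
      norm_num at this
      exact this.symm
    apply (hbase.continuousOn_mul)
    intro x hx
    apply ContinuousAt.continuousWithinAt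
    have hx' : x ≠ 0 := by
      rw [uIcc_of_le (by norm_num)] at hx
      intro h; rw [h] at hx; norm_num at hx
    exact Real.continuousAt_rpow_const _ _ (.inl hx')
  exact h1.trans h2

lemma symm_aux (p q : ℝ) :
    (∫ t in (0:ℝ)..1, t ^ p * (1 - t) ^ q) = ∫ t in (0:ℝ)..1, t ^ q * (1 - t) ^ p := by
  have := intervalIntegral.integral_comp_sub_left (a := 0) (b := 1) (fun t : ℝ => t ^ q * (1 - t) ^ p) 1
  norm_num at this
  rw [← this]
  apply intervalIntegral.integral_congr
  intro x _
  simp only [sub_sub_cancel]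
  ring

lemma I1_aux {p : ℝ} (hp : -1 < p) :
    (∫ t in (0:ℝ)..1, t ^ (p+1) * (1 - t) ^ p)
      = (∫ t in (0:ℝ)..1, t ^ p * (1 - t) ^ p) / 2 := by
  have hsplit : (∫ t in (0:ℝ)..1, t ^ p * (1 - t) ^ p)
      = (∫ t in (0:ℝ)..1, t ^ (p+1) * (1 - t) ^ p)
        + ∫ t in (0:ℝ)..1, t ^ p * (1 - t) ^ (p+1) := by
    rw [← intervalIntegral.integral_add (integrable_aux (by linarith) hp)
      (integrable_aux hp (by linarith))]
    apply intervalIntegral.integral_congr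
    intro x hx
    rw [uIcc_of_le (by norm_num)] at hx
    simp only
    rcases eq_or_lt_of_le hx.1 with h0 | h0
    · rw [← h0]
      simp [Real.zero_rpow (show p+1 ≠ 0 by linarith), Real.one_rpow]
    rcases eq_or_lt_of_le hx.2 with h1 | h1
    · rw [h1]
      simp [Real.zero_rpow (show p+1 ≠ 0 by linarith), Real.one_rpow]
    · rw [Real.rpow_add_one (ne_of_gt h0), Real.rpow_add_one (show (1:ℝ)-x ≠ 0 by linarith)]
      ring
  rw [symm_aux p (p+1)] at hsplit
  linarith

lemma J_aux {p : ℝ} (hp : -1 < p) :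
    (∫ t in (0:ℝ)..1, t ^ (p+1) * (1 - t) ^ (p+1))
      = (∫ t in (0:ℝ)..1, t ^ (p+1) * (1 - t) ^ p)
        - ∫ t in (0:ℝ)..1, t ^ (p+2) * (1 - t) ^ p := by
  rw [← intervalIntegral.integral_sub (integrable_aux (by linarith) hp)
    (integrable_aux (by linarith) hp)]
  apply intervalIntegral.integral_congr
  intro x hx
  rw [uIcc_of_le (by norm_num)] at hx
  simp only
  rcases eq_or_lt_of_le hx.1 with h0 | h0
  · rw [← h0]
    simp [Real.zero_rpow (show p+1 ≠ 0 by linarith), Real.zero_rpow (show p+2 ≠ 0 by linarith)]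
  rcases eq_or_lt_of_le hx.2 with h1 | h1
  · rw [h1]
    simp [Real.zero_rpow (show p+1 ≠ 0 by linarith), Real.one_rpow]
  · have hx1 : x ^ (p+1) = x ^ p * x := Real.rpow_add_one (ne_of_gt h0) p
    have hx2 : x ^ (p+2) = x ^ p * x * x := by
      rw [show p+2 = p+1+1 by ring, Real.rpow_add_one (ne_of_gt h0), hx1]
    have hy1 : (1-x) ^ (p+1) = (1-x) ^ p * (1-x) :=
      Real.rpow_add_one (show (1:ℝ)-x ≠ 0 by linarith) p
    rw [hx1, hx2, hy1]
    ring

lemma I2_aux {p : ℝ} (hp : -1 < p) :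
    (2*p+3) * (∫ t in (0:ℝ)..1, t ^ (p+2) * (1 - t) ^ p)
      = (p+2) * ∫ t in (0:ℝ)..1, t ^ (p+1) * (1 - t) ^ p := by
  set I1 := ∫ t in (0:ℝ)..1, t ^ (p+1) * (1 - t) ^ p with hI1
  set I2 := ∫ t in (0:ℝ)..1, t ^ (p+2) * (1 - t) ^ p with hI2
  have hFTC : (∫ t in (0:ℝ)..1,
      ((p+2) * (t^(p+1)*(1-t)^(p+1)) - (p+1) * (t^(p+2)*(1-t)^p))) = 0 := by
    have hcont : ContinuousOn (fun t : ℝ => t^(p+2) * (1-t)^(p+1)) (Icc 0 1) :=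
      ((rpow_cont (p+2) (by linarith)).mul
        ((rpow_cont (p+1) (by linarith)).comp (continuous_const.sub continuous_id))).continuousOn
    have hderiv : ∀ x ∈ Ioo (0:ℝ) 1, HasDerivAt (fun t : ℝ => t^(p+2) * (1-t)^(p+1))
        ((p+2) * (x^(p+1)*(1-x)^(p+1)) - (p+1) * (x^(p+2)*(1-x)^p)) x := by
      intro x hx
      have h1 : HasDerivAt (fun t : ℝ => t^(p+2)) ((p+2) * x^(p+2-1)) x :=
        Real.hasDerivAt_rpow_const (.inl hx.1.ne')
      have h2' : HasDerivAt (fun t : ℝ => (1-t)) (-1) x := (hasDerivAt_id x).const_sub 1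
      have h2 : HasDerivAt (fun t : ℝ => (1-t)^(p+1))
          ((p+1) * (1-x)^(p+1-1) * (-1)) x :=
        (Real.hasDerivAt_rpow_const (.inl (show (1:ℝ)-x ≠ 0 by have := hx.2; intro h; nlinarith))).comp x h2'
      have := h1.mul h2
      have e1 : p + 2 - 1 = p + 1 := by ring
      have e2 : p + 1 - 1 = p := by ring
      rw [e1, e2] at this
      exact this.congr_deriv (by ring)
    have hint : IntervalIntegrable (fun t : ℝ =>
        (p+2) * (t^(p+1)*(1-t)^(p+1)) - (p+1) * (t^(p+2)*(1-t)^p)) volume 0 1 :=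
      ((integrable_aux (by linarith) (by linarith)).const_mul _).sub
        ((integrable_aux (by linarith) hp).const_mul _)
    rw [intervalIntegral.integral_eq_sub_of_hasDerivAt_of_le (by norm_num) hcont hderiv hint]
    simp [Real.zero_rpow (show p+1 ≠ 0 by linarith), Real.zero_rpow (show p+2 ≠ 0 by linarith),
      Real.one_rpow]
  rw [intervalIntegral.integral_sub
    (((integrable_aux (by linarith) (by linarith)).const_mul _))
    (((integrable_aux (by linarith) hp).const_mul _)),
    intervalIntegral.integral_const_mul, intervalIntegral.integral_const_mul,
    J_aux hp] at hFTC
  linarith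

lemma moment_combo {p : ℝ} (hp : -1 < p) (a b c : ℝ) :
    (∫ t in (0:ℝ)..1, t ^ p * (1 - t) ^ p * (a * (t * t) + b * t + c))
      = a * (∫ t in (0:ℝ)..1, t ^ (p+2) * (1 - t) ^ p)
        + b * (∫ t in (0:ℝ)..1, t ^ (p+1) * (1 - t) ^ p)
        + c * (∫ t in (0:ℝ)..1, t ^ p * (1 - t) ^ p) := by
  rw [← intervalIntegral.integral_const_mul, ← intervalIntegral.integral_const_mul,
      ← intervalIntegral.integral_const_mul,
      ← intervalIntegral.integral_add
        ((integrable_aux (by linarith) hp).const_mul a)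
        ((integrable_aux (by linarith) hp).const_mul b),
      ← intervalIntegral.integral_add
        (((integrable_aux (by linarith) hp).const_mul a).add
          ((integrable_aux (by linarith) hp).const_mul b))
        ((integrable_aux hp hp).const_mul c)]
  apply intervalIntegral.integral_congr
  intro x hx
  rw [uIcc_of_le (by norm_num)] at hx
  simp only
  rcases eq_or_lt_of_le hx.1 with h0 | h0
  · rw [← h0]
    simp [Real.zero_rpow (show p+1 ≠ 0 by linarith), Real.zero_rpow (show p+2 ≠ 0 by linarith)]
    ring
  · have hx1 : x ^ (p+1) = x ^ p * x := Real.rpow_add_one (ne_of_gt h0) p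
    have hx2 : x ^ (p+2) = x ^ p * x * x := by
      rw [show p+2 = p+1+1 by ring, Real.rpow_add_one (ne_of_gt h0), hx1]
    rw [hx1, hx2]
    ring

lemma aff_comb (f : (Fin 2 → ℝ) →ᵃ[ℝ] ℝ) (t : ℝ) (m b : Fin 2 → ℝ) :
    f (t • m + (1 - t) • b) = t * f m + (1 - t) * f b := by
  have h : t • m + (1 - t) • b = AffineMap.lineMap b m t := by
    rw [AffineMap.lineMap_apply_module, add_comm]
  rw [h, AffineMap.apply_lineMap, AffineMap.lineMap_apply_module, smul_eq_mul, smul_eq_mul]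
  ring

lemma aff_mid (f : (Fin 2 → ℝ) →ᵃ[ℝ] ℝ) (x y : Fin 2 → ℝ) :
    f ((x + y) / 2) = (f x + f y) / 2 := by
  have h : (x + y) / 2 = (1/2 : ℝ) • x + (1 - (1/2:ℝ)) • y := by
    funext i
    simp [Pi.smul_apply, Pi.div_apply, Pi.add_apply]
    ring
  rw [h, aff_comb]
  ring

lemma aff_bary (f : (Fin 2 → ℝ) →ᵃ[ℝ] ℝ) (x y z : Fin 2 → ℝ) :
    f ((x + y + z) / 3) = (f x + f y + f z) / 3 := by
  have h : (x + y + z) / 3 = (2/3 : ℝ) • ((x + y) / 2) + (1 - (2/3:ℝ)) • z := by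
    funext i
    simp [Pi.smul_apply, Pi.div_apply, Pi.add_apply]
    ring
  rw [h, aff_comb, aff_mid]
  ring

end AuxSecondClass

noncomputable def phiAF (lam : Fin 3 → ((Fin 2 → ℝ) →ᵃ[ℝ] ℝ)) (i : Fin 3)
    (x : Fin 2 → ℝ) : ℝ :=
  lam i x * (1 - 3 * lam (i + 1) x - 3 * lam (i + 2) x)

/-- Edge midpoints of the triangle. -/
noncomputable def midpt (v : Fin 3 → (Fin 2 → ℝ)) (j : Fin 3) : Fin 2 → ℝ :=
  (v (j + 1) + v (j + 2)) / 2

/-- Barycenter of the triangle. -/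
noncomputable def barycen (v : Fin 3 → (Fin 2 → ℝ)) : Fin 2 → ℝ :=
  (v 0 + v 1 + v 2) / 3

theorem second_class_functionals_on_phi
    (v : Fin 3 → (Fin 2 → ℝ)) (lam : Fin 3 → ((Fin 2 → ℝ) →ᵃ[ℝ] ℝ))
    (hv : AffineIndependent ℝ v)
    (hdelta : ∀ i j, lam i (v j) = if i = j then 1 else 0)
    (hsum : ∀ x, lam 0 x + lam 1 x + lam 2 x = 1)
    (μ : ℝ) (hμ : -1 < μ)
    (σ : ℝ) (hσ : σ = ∫ u in (0:ℝ)..1, u ^ μ * (1 - u) ^ μ) :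
    ∀ j : Fin 3,
      (∫ t in (0:ℝ)..1, t ^ μ * (1 - t) ^ μ *
          phiAF lam j (t • midpt v j + (1 - t) • barycen v))
        = σ / 2 * (-(3 * μ + 4) / (3 * (2 * μ + 3))) ∧
      ∀ i : Fin 3, i ≠ j →
        (∫ t in (0:ℝ)..1, t ^ μ * (1 - t) ^ μ *
            phiAF lam i (t • midpt v j + (1 - t) • barycen v))
          = σ / 2 * (-(15 * μ + 22) / (12 * (2 * μ + 3))) := by
  intro j
  have hLbary : ∀ i, lam i (barycen v) = 1/3 := by
    intro i
    rw [show barycen v = (v 0 + v 1 + v 2)/3 from rfl, aff_bary, hdelta, hdelta, hdelta]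
    fin_cases i <;> simp [Fin.ext_iff] <;> norm_num
  have hLmid : ∀ i, lam i (midpt v j) = if i = j then 0 else 1/2 := by
    intro i
    rw [show midpt v j = (v (j+1) + v (j+2))/2 from rfl, aff_mid, hdelta, hdelta]
    fin_cases i <;> fin_cases j <;> simp [Fin.ext_iff] <;> norm_num
  have hL : ∀ (i : Fin 3) (t : ℝ), lam i (t • midpt v j + (1 - t) • barycen v)
      = t * (if i = j then 0 else 1/2) + (1 - t) * (1/3) := by
    intro i t
    rw [aff_comb, hLmid, hLbary]
  have hne1 : ∀ k : Fin 3, k + 1 ≠ k := by decide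
  have hne2 : ∀ k : Fin 3, k + 2 ≠ k := by decide
  have h32 : 2*μ+3 ≠ 0 := by intro h; linarith
  have hI1 : (∫ t in (0:ℝ)..1, t ^ (μ+1) * (1 - t) ^ μ) = σ / 2 := by
    rw [I1_aux hμ, ← hσ]
  have hI2 : (∫ t in (0:ℝ)..1, t ^ (μ+2) * (1 - t) ^ μ) = (μ+2) * σ / (2*(2*μ+3)) := by
    have h2 := I2_aux hμ
    rw [hI1] at h2
    rw [eq_div_iff (mul_ne_zero two_ne_zero h32)]
    linarith
  constructor
  · have key : ∀ t : ℝ, t^μ*(1-t)^μ * phiAF lam j (t • midpt v j + (1-t) • barycen v)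
        = t^μ*(1-t)^μ * ((1/3) * (t*t) + 0 * t + (-1/3)) := by
      intro t
      have h1 := hL j t
      have h2 := hL (j+1) t
      have h3 := hL (j+2) t
      rw [if_pos rfl] at h1
      rw [if_neg (hne1 j)] at h2
      rw [if_neg (hne2 j)] at h3
      simp only [phiAF]
      rw [h1, h2, h3]
      ring
    simp only [key]
    rw [moment_combo hμ, hI1, hI2, ← hσ]
    simp only [div_eq_mul_inv, mul_inv]
    linear_combination (σ/3) * mul_inv_cancel₀ h32
  · intro i hij
    have hcase : (i + 1 = j ∧ i + 2 ≠ j) ∨ (i + 1 ≠ j ∧ i + 2 = j) :=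
      (by decide : ∀ a b : Fin 3, a ≠ b → (a + 1 = b ∧ a + 2 ≠ b) ∨ (a + 1 ≠ b ∧ a + 2 = b)) i j hij
    have key : ∀ t : ℝ, t^μ*(1-t)^μ * phiAF lam i (t • midpt v j + (1-t) • barycen v)
        = t^μ*(1-t)^μ * ((1/12) * (t*t) + 0 * t + (-1/3)) := by
      intro t
      have h1 := hL i t
      have h2 := hL (i+1) t
      have h3 := hL (i+2) t
      rw [if_neg hij] at h1
      simp only [phiAF]
      rcases hcase with ⟨ha, hb⟩ | ⟨ha, hb⟩
      · rw [if_pos ha] at h2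
        rw [if_neg hb] at h3
        rw [h1, h2, h3]
        ring
      · rw [if_neg ha] at h2
        rw [if_pos hb] at h3
        rw [h1, h2, h3]
        ring
    simp only [key]
    rw [moment_combo hμ, hI1, hI2, ← hσ]
    simp only [div_eq_mul_inv, mul_inv]
    linear_combination (σ/3) * mul_inv_cancel₀ h32
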